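/- For every integer n ≥ 1 and every real number t > 0, the matrix E(−t) = I − t·S is invertible and its inverse (I − t·S)^{−1} is totally nonnegative. -/

import Mathlib

noncomputable section

/-- The n×n shift matrix: S_{i,j} = 1 if j = i + 1 (1-based) and 0 otherwise. -/
def shiftM (n : ℕ) : Matrix (Fin n) (Fin n) ℝ :=
  Matrix.of fun i j => if (i : ℕ) + 1 = (j : ℕ) then 1 else 0

/-- A real square matrix is totally nonnegative if every minor (determinant of a
square submatrix given by strictly increasing row and column selections) is ≥ 0. -/
def TotallyNonneg {n : ℕ} (A : Matrix (Fin n) (Fin n) ℝ) : Prop :=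
  ∀ (k : ℕ) (r c : Fin k → Fin n), StrictMono r → StrictMono c →
    0 ≤ (A.submatrix r c).det

/-- A real square matrix is totally positive if every minor is > 0. -/
def TotallyPos {n : ℕ} (A : Matrix (Fin n) (Fin n) ℝ) : Prop :=
  ∀ (k : ℕ) (r c : Fin k → Fin n), StrictMono r → StrictMono c →
    0 < (A.submatrix r c).det

/-- Minors of the 0/1 "staircase" matrix `[r a ≤ c b]` are nonnegative. -/
lemma detB_nonneg : ∀ (k : ℕ) (r c : Fin k → ℕ), StrictMono r → StrictMono c →
    0 ≤ (Matrix.of fun a b : Fin k => if r a ≤ c b then (1:ℝ) else 0).det := by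
  intro k
  induction k with
  | zero => intro r c _ _; simp [Matrix.det_fin_zero]
  | succ m ih =>
    intro r c hr hc
    by_cases h2 : ∀ a : Fin (m+1), a ≠ 0 → c 0 < r a
    · rw [Matrix.det_succ_column_zero, Finset.sum_eq_single 0]
      · simp only [Fin.val_zero, pow_zero, one_mul, Fin.succAbove_zero, Matrix.of_apply]
        have hsub : ((Matrix.of fun a b : Fin (m+1) => if r a ≤ c b then (1:ℝ) else 0).submatrix
            Fin.succ Fin.succ) =
            Matrix.of fun a b : Fin m => if (r ∘ Fin.succ) a ≤ (c ∘ Fin.succ) b then (1:ℝ) else 0 := by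
          ext a b; simp
        rw [hsub]
        have hih := ih (r ∘ Fin.succ) (c ∘ Fin.succ)
          (hr.comp fun a b hab => Fin.succ_lt_succ_iff.mpr hab)
          (hc.comp fun a b hab => Fin.succ_lt_succ_iff.mpr hab)
        have hpos : (0:ℝ) ≤ if r 0 ≤ c 0 then (1:ℝ) else 0 := by positivity
        exact mul_nonneg hpos hih
      · intro i _ hi
        have := h2 i hi
        simp [Matrix.of_apply, not_le.mpr this]
      · simp
    · push_neg at h2
      obtain ⟨a, ha0, hale⟩ := h2
      have hr0 : r 0 ≤ c 0 := le_trans (hr (Fin.pos_of_ne_zero ha0)).le hale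
      refine le_of_eq (Matrix.det_zero_of_row_eq (Ne.symm ha0) ?_).symm
      funext b
      have h1 : r 0 ≤ c b := hr0.trans (hc.monotone (Fin.zero_le b))
      have h2 : r a ≤ c b := hale.trans (hc.monotone (Fin.zero_le b))
      simp [Matrix.of_apply, h1, h2]

/-- The explicit inverse of `1 - t • shiftM n`: upper triangular with entries `t^(j-i)`. -/
def invM (n : ℕ) (t : ℝ) : Matrix (Fin n) (Fin n) ℝ :=
  Matrix.of fun i j => if (i : ℕ) ≤ (j : ℕ) then t ^ ((j : ℕ) - (i : ℕ)) else 0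

lemma mul_invM (n : ℕ) (t : ℝ) : (1 - t • shiftM n) * invM n t = 1 := by
  ext i j
  rw [Matrix.sub_mul, Matrix.one_mul, Matrix.smul_mul, Matrix.sub_apply, Matrix.smul_apply,
    Matrix.mul_apply, Matrix.one_apply]
  have hS : ∀ k, shiftM n i k * invM n t k j
      = if ((i:ℕ)+1 = (k:ℕ)) then invM n t k j else 0 := by
    intro k
    simp [shiftM, ite_mul]
  simp only [hS]
  by_cases hin : (i:ℕ)+1 < n
  · rw [Finset.sum_eq_single (⟨(i:ℕ)+1, hin⟩ : Fin n)]
    · simp only [invM, Matrix.of_apply]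
      rcases lt_trichotomy (i:ℕ) (j:ℕ) with h | h | h
      · have hij : ¬ i = j := by intro hh; subst hh; exact lt_irrefl _ h
        have h1 : (i:ℕ) ≤ j := h.le
        have h2 : (i:ℕ)+1 ≤ j := h
        have he : (j:ℕ) - (i:ℕ) = ((j:ℕ) - ((i:ℕ)+1)) + 1 := by omega
        simp only [hij, if_false, h1, if_true, h2, if_true, he, pow_succ, smul_eq_mul]
        ring
      · have hij : i = j := Fin.ext h
        simp [hij, h, Nat.sub_self]
      · have hij : ¬ i = j := by intro hh; subst hh; exact lt_irrefl _ h
        have h1 : ¬ (i:ℕ) ≤ j := not_le.mpr h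
        have h2 : ¬ (i:ℕ)+1 ≤ j := by omega
        simp [hij, h1, h2]
    · intro k _ hk
      have : ¬ ((i:ℕ)+1 = (k:ℕ)) := by
        intro hh; exact hk (Fin.ext hh.symm)
      simp [this]
    · simp
  · have hz : ∀ k : Fin n, (if ((i:ℕ)+1 = (k:ℕ)) then invM n t k j else 0) = 0 := by
      intro k
      have : ¬ ((i:ℕ)+1 = (k:ℕ)) := by have := k.isLt; omega
      simp [this]
    simp only [hz, Finset.sum_const_zero, mul_zero, sub_zero]
    have hji : (j:ℕ) ≤ i := by have := j.isLt; omega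
    rcases eq_or_lt_of_le hji with h | h
    · have hij : i = j := Fin.ext h.symm
      simp [hij, invM, Nat.sub_self]
    · have hij : ¬ i = j := by intro hh; subst hh; exact lt_irrefl _ h
      have h1 : ¬ i ≤ j := not_le.mpr (Fin.lt_def.mpr h)
      simp [hij, invM, h1]

lemma invM_totallyNonneg (n : ℕ) (t : ℝ) (ht : 0 < t) : TotallyNonneg (invM n t) := by
  intro k r c hr hc
  have hfac : (invM n t).submatrix r c =
      Matrix.diagonal (fun a => (t ^ ((r a : ℕ)))⁻¹) *
        (Matrix.of fun a b : Fin k => if ((r a : ℕ)) ≤ ((c b : ℕ)) then (1:ℝ) else 0) *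
          Matrix.diagonal (fun b => t ^ ((c b : ℕ))) := by
    ext a b
    rw [Matrix.mul_diagonal, Matrix.diagonal_mul, Matrix.submatrix_apply]
    simp only [invM, Matrix.of_apply]
    by_cases h : ((r a : ℕ)) ≤ ((c b : ℕ))
    · rw [if_pos h, if_pos h, pow_sub₀ t ht.ne' h]
      ring
    · rw [if_neg h, if_neg h]
      ring
  rw [hfac, Matrix.det_mul, Matrix.det_mul, Matrix.det_diagonal, Matrix.det_diagonal]
  have hB := detB_nonneg k (fun a => (r a : ℕ)) (fun b => (c b : ℕ))
    (fun a b hab => Fin.lt_def.mp (hr hab)) (fun a b hab => Fin.lt_def.mp (hc hab))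
  have h1 : (0:ℝ) ≤ ∏ a : Fin k, (t ^ ((r a : ℕ)))⁻¹ :=
    Finset.prod_nonneg fun a _ => inv_nonneg.mpr (pow_nonneg ht.le _)
  have h2 : (0:ℝ) ≤ ∏ b : Fin k, t ^ ((c b : ℕ)) :=
    Finset.prod_nonneg fun b _ => pow_nonneg ht.le _
  exact mul_nonneg (mul_nonneg h1 hB) h2

/-- for n ≥ 1 and t > 0, the matrix E(−t) = I − t·S is invertible
and its inverse is totally nonnegative. -/
theorem statement_14 (n : ℕ) (hn : 1 ≤ n) (t : ℝ) (ht : 0 < t) :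
    IsUnit (1 - t • shiftM n) ∧ TotallyNonneg (1 - t • shiftM n)⁻¹ := by
  have hmul := mul_invM n t
  have hdet : (1 - t • shiftM n).det * (invM n t).det = 1 := by
    rw [← Matrix.det_mul, hmul, Matrix.det_one]
  refine ⟨(Matrix.isUnit_iff_isUnit_det _).2 (IsUnit.of_mul_eq_one _ hdet), ?_⟩
  rw [Matrix.inv_eq_right_inv hmul]
  exact invM_totallyNonneg n t ht
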